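/- Let n ≥ 1, let A be a real n×n matrix with Aᵀ = −A, and let d : Fin n → ℝ. Then every complex eigenvalue z of the matrix A + diagonal(d) satisfies min_{j} d_j ≤ Re z ≤ max_{j} d_j, where the minimum and maximum are over all indices j. -/

import Mathlib

open Matrix

/-- **Bendixson inequalities for an antisymmetric plus diagonal real matrix.**
If `Aᵀ = -A` and `d : Fin n → ℝ`, then every complex eigenvalue `z` of
`A + diagonal d` satisfies `min_j d j ≤ Re z ≤ max_j d j`. -/
theorem bendixson_antisymm_add_diagonal (n : ℕ) (hn : 1 ≤ n)
    (A : Matrix (Fin n) (Fin n) ℝ) (hA : Aᵀ = -A) (d : Fin n → ℝ) (z : ℂ)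
    (hz : z ∈ spectrum ℂ ((A + Matrix.diagonal d).map Complex.ofReal)) :
    Finset.univ.inf' ⟨⟨0, hn⟩, Finset.mem_univ _⟩ d ≤ z.re ∧
      z.re ≤ Finset.univ.sup' ⟨⟨0, hn⟩, Finset.mem_univ _⟩ d := by
  set M := (A + Matrix.diagonal d).map Complex.ofReal with hM
  -- eigenvector
  have hz' : Module.End.HasEigenvalue (Matrix.toLin' M) z := by
    rw [Module.End.hasEigenvalue_iff_mem_spectrum]
    rwa [show (Matrix.toLin' M : Module.End ℂ (Fin n → ℂ)) = Matrix.toLinAlgEquiv' M from rfl,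
      AlgEquiv.spectrum_eq Matrix.toLinAlgEquiv' M]
  obtain ⟨v, hv⟩ := hz'.exists_hasEigenvector
  have hv0 : v ≠ 0 := hv.right
  have hmv : M.mulVec v = z • v := by
    have := hv.apply_eq_smul
    simpa [Matrix.toLin'_apply] using this
  -- the scalar identity
  have hkey : ∑ i, (starRingEnd ℂ) (v i) * (M.mulVec v i)
      = z * ∑ i, (starRingEnd ℂ) (v i) * v i := by
    rw [hmv]
    rw [Finset.mul_sum]
    refine Finset.sum_congr rfl fun i _ => ?_
    simp [Pi.smul_apply, smul_eq_mul]; ring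
  -- expand mulVec
  have hexp : ∑ i, (starRingEnd ℂ) (v i) * (M.mulVec v i)
      = (∑ i, ∑ j, (starRingEnd ℂ) (v i) * ((A i j : ℂ) * v j))
        + ∑ i, (d i : ℂ) * ((starRingEnd ℂ) (v i) * v i) := by
    rw [← Finset.sum_add_distrib]
    refine Finset.sum_congr rfl fun i _ => ?_
    have : M.mulVec v i = (∑ j, (A i j : ℂ) * v j) + (d i : ℂ) * v i := by
      simp only [hM, Matrix.mulVec, dotProduct, Matrix.map_apply, Matrix.add_apply]
      have h1 : ∀ j, ((A i j + Matrix.diagonal d i j : ℝ) : ℂ) * v j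
          = (A i j : ℂ) * v j + ((Matrix.diagonal d i j : ℝ) : ℂ) * v j := by
        intro j; push_cast; ring
      rw [Finset.sum_congr rfl fun j _ => h1 j, Finset.sum_add_distrib]
      congr 1
      rw [Finset.sum_eq_single i]
      · simp [Matrix.diagonal_apply_eq]
      · intro b _ hb; simp [Matrix.diagonal_apply_ne' d hb]
      · intro h; exact absurd (Finset.mem_univ i) h
    rw [this, mul_add, Finset.mul_sum]
    ring
  -- the A part has zero real part
  have hA0 : (∑ i, ∑ j, (starRingEnd ℂ) (v i) * ((A i j : ℂ) * v j)).re = 0 := by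
    have hre : (∑ i, ∑ j, (starRingEnd ℂ) (v i) * ((A i j : ℂ) * v j)).re
        = ∑ i, ∑ j, A i j * ((starRingEnd ℂ) (v i) * v j).re := by
      rw [Complex.re_sum]
      refine Finset.sum_congr rfl fun i _ => ?_
      rw [Complex.re_sum]
      refine Finset.sum_congr rfl fun j _ => ?_
      have : (starRingEnd ℂ) (v i) * ((A i j : ℂ) * v j)
          = (A i j : ℂ) * ((starRingEnd ℂ) (v i) * v j) := by ring
      rw [this]
      simp [Complex.mul_re]
    rw [hre]
    have hswap : ∑ i, ∑ j, A i j * ((starRingEnd ℂ) (v i) * v j).re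
        = ∑ i, ∑ j, A j i * ((starRingEnd ℂ) (v j) * v i).re := by
      rw [Finset.sum_comm]
    have hneg : ∀ i j, A j i * ((starRingEnd ℂ) (v j) * v i).re
        = -(A i j * ((starRingEnd ℂ) (v i) * v j).re) := by
      intro i j
      have h1 : A j i = -A i j := by
        have := congrFun (congrFun hA i) j
        simpa [Matrix.transpose_apply] using this
      have h2 : ((starRingEnd ℂ) (v j) * v i).re = ((starRingEnd ℂ) (v i) * v j).re := by
        rw [Complex.mul_re, Complex.mul_re]
        simp [Complex.conj_re, Complex.conj_im]
        ring
      rw [h1, h2]; ring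
    have : ∑ i, ∑ j, A i j * ((starRingEnd ℂ) (v i) * v j).re
        = -∑ i, ∑ j, A i j * ((starRingEnd ℂ) (v i) * v j).re := by
      conv_lhs => rw [hswap]
      rw [← Finset.sum_neg_distrib]
      refine Finset.sum_congr rfl fun i _ => ?_
      rw [← Finset.sum_neg_distrib]
      exact Finset.sum_congr rfl fun j _ => hneg i j
    linarith [this]
  -- real parts
  set S : ℝ := ∑ i, Complex.normSq (v i) with hS
  have hconj : ∀ i, (starRingEnd ℂ) (v i) * v i = (Complex.normSq (v i) : ℂ) := by
    intro i; rw [mul_comm, Complex.mul_conj]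
  have hSpos : 0 < S := by
    rcases Function.ne_iff.mp hv0 with ⟨i, hi⟩
    have := Complex.normSq_pos.mpr hi
    have hle : Complex.normSq (v i) ≤ S := by
      apply Finset.single_le_sum (f := fun i => Complex.normSq (v i))
        (fun j _ => Complex.normSq_nonneg _) (Finset.mem_univ i)
    linarith
  have hmain : z.re * S = ∑ i, d i * Complex.normSq (v i) := by
    have hre := congrArg Complex.re hkey
    rw [hexp] at hre
    rw [Complex.add_re, hA0, zero_add] at hre
    have hL : (∑ i, (d i : ℂ) * ((starRingEnd ℂ) (v i) * v i)).re
        = ∑ i, d i * Complex.normSq (v i) := by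
      rw [Complex.re_sum]
      refine Finset.sum_congr rfl fun i _ => ?_
      rw [hconj i, ← Complex.ofReal_mul, Complex.ofReal_re]
    have hR : (z * ∑ i, (starRingEnd ℂ) (v i) * v i).re = z.re * S := by
      have : (∑ i, (starRingEnd ℂ) (v i) * v i) = (S : ℂ) := by
        rw [Finset.sum_congr rfl fun i _ => hconj i, hS]
        push_cast; ring
      rw [this, Complex.mul_re]
      simp
    rw [hL, hR] at hre
    linarith
  constructor
  · have hb : (Finset.univ.inf' ⟨⟨0, hn⟩, Finset.mem_univ _⟩ d) * S
        ≤ ∑ i, d i * Complex.normSq (v i) := by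
      rw [hS, Finset.mul_sum]
      refine Finset.sum_le_sum fun i _ => ?_
      exact mul_le_mul_of_nonneg_right (Finset.inf'_le _ (Finset.mem_univ i))
        (Complex.normSq_nonneg _)
    rw [← hmain] at hb
    exact le_of_mul_le_mul_right hb hSpos
  · have hb : ∑ i, d i * Complex.normSq (v i)
        ≤ (Finset.univ.sup' ⟨⟨0, hn⟩, Finset.mem_univ _⟩ d) * S := by
      rw [hS, Finset.mul_sum]
      refine Finset.sum_le_sum fun i _ => ?_
      exact mul_le_mul_of_nonneg_right (Finset.le_sup' _ (Finset.mem_univ i))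
        (Complex.normSq_nonneg _)
    rw [← hmain] at hb
    exact le_of_mul_le_mul_right hb hSpos
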